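/- For every topological group G, the convolution map (m, n) ↦ m ∗ n is jointly continuous on norm-bounded subsets of M(G) when M(G) carries the UEB topology inherited from LUC(G)*. -/

import Mathlib

noncomputable section
set_option linter.unusedSectionVars false

open Filter Topology MeasureTheory BoundedContinuousFunction

section Defs

variable (G : Type*) [Group G] [TopologicalSpace G] [IsTopologicalGroup G]

/-- A bounded left uniformly continuous function on a topological group. -/
def IsLUCFun (f : G → ℂ) : Prop :=
  (∃ C, ∀ s, ‖f s‖ ≤ C) ∧
    ∀ ε > 0, ∃ U ∈ 𝓝 (1 : G), ∀ s t : G, s * t⁻¹ ∈ U → ‖f s - f t‖ < ε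

/-- A set of functions is equi-LUC if it is uniformly bounded in the sup norm and
equi-uniformly continuous for the right uniformity. -/
def EquiLUCFun (F : Set (G → ℂ)) : Prop :=
  (∃ C, ∀ f ∈ F, ∀ s, ‖f s‖ ≤ C) ∧
    ∀ ε > 0, ∃ U ∈ 𝓝 (1 : G), ∀ f ∈ F, ∀ s t : G, s * t⁻¹ ∈ U → ‖f s - f t‖ < ε

/-- A SIN group: there is a base of neighbourhoods of the identity that are
invariant under all inner automorphisms. -/
def IsSIN : Prop :=
  ∀ U ∈ 𝓝 (1 : G), ∃ V ∈ 𝓝 (1 : G), V ⊆ U ∧ ∀ x : G, ∀ v ∈ V, x * v * x⁻¹ ∈ V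

end Defs

section LUCSpace

variable (G : Type*) [Group G] [TopologicalSpace G] [IsTopologicalGroup G]

/-- The space `LUC(G)` of bounded left uniformly continuous complex functions on `G`,
as a subspace of the bounded continuous functions with the sup norm. -/
def LUC : Submodule ℂ (G →ᵇ ℂ) where
  carrier := {f | ∀ ε > 0, ∃ U ∈ 𝓝 (1 : G), ∀ s t : G, s * t⁻¹ ∈ U → ‖f s - f t‖ < ε}
  zero_mem' := fun ε hε => ⟨Set.univ, Filter.univ_mem, fun s t _ => by simpa using hε⟩
  add_mem' := by
    intro f g hf hg ε hε
    obtain ⟨U, hU, hUf⟩ := hf (ε / 2) (by linarith)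
    obtain ⟨V, hV, hVg⟩ := hg (ε / 2) (by linarith)
    refine ⟨U ∩ V, Filter.inter_mem hU hV, fun s t hst => ?_⟩
    have h1 := hUf s t hst.1
    have h2 := hVg s t hst.2
    have e : (f + g) s - (f + g) t = (f s - f t) + (g s - g t) := by
      simp only [BoundedContinuousFunction.coe_add, Pi.add_apply]; ring
    calc ‖(f + g) s - (f + g) t‖ ≤ ‖f s - f t‖ + ‖g s - g t‖ := by
          rw [e]; exact norm_add_le _ _
      _ < ε := by linarith
  smul_mem' := by
    intro c f hf ε hε
    obtain ⟨U, hU, hUf⟩ := hf (ε / (‖c‖ + 1)) (by positivity)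
    refine ⟨U, hU, fun s t hst => ?_⟩
    have h := hUf s t hst
    have e : (c • f) s - (c • f) t = c * (f s - f t) := by
      simp only [BoundedContinuousFunction.coe_smul, Pi.smul_apply, smul_eq_mul]; ring
    rw [e, norm_mul]
    calc ‖c‖ * ‖f s - f t‖ ≤ ‖c‖ * (ε / (‖c‖ + 1)) :=
          mul_le_mul_of_nonneg_left h.le (norm_nonneg c)
      _ < (‖c‖ + 1) * (ε / (‖c‖ + 1)) :=
          mul_lt_mul_of_pos_right (by linarith) (by positivity)
      _ = ε := by field_simp

/-- Equi-LUC subsets of the space `LUC(G)`. -/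
def EquiLUC (F : Set ↥(LUC G)) : Prop :=
  (∃ C, ∀ f ∈ F, ‖f‖ ≤ C) ∧
    ∀ ε > 0, ∃ U ∈ 𝓝 (1 : G), ∀ f ∈ F, ∀ s t : G,
      s * t⁻¹ ∈ U → ‖(f : G →ᵇ ℂ) s - (f : G →ᵇ ℂ) t‖ < ε

variable {G}

lemma lTrans_mem (s : G) {f : G →ᵇ ℂ} (hf : f ∈ LUC G) :
    f.compContinuous ⟨fun x => s * x, by continuity⟩ ∈ LUC G := by
  intro ε hε
  obtain ⟨U, hU, hUf⟩ := hf ε hε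
  refine ⟨(fun u => s * u * s⁻¹) ⁻¹' U, ?_, ?_⟩
  · have hc : ContinuousAt (fun u : G => s * u * s⁻¹) 1 := by fun_prop
    exact hc.preimage_mem_nhds (by simpa using hU)
  · intro x y hxy
    have h' : (s * x) * (s * y)⁻¹ ∈ U := by
      have h'' : s * (x * y⁻¹) * s⁻¹ ∈ U := hxy
      simpa [mul_inv_rev, mul_assoc] using h''
    exact hUf (s * x) (s * y) h'

/-- Left translation `ℓ_s f (x) = f (s x)` on `LUC(G)`. -/
def lTrans (s : G) (f : ↥(LUC G)) : ↥(LUC G) :=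
  ⟨(f : G →ᵇ ℂ).compContinuous ⟨fun x => s * x, by continuity⟩, lTrans_mem s f.2⟩

@[simp] lemma lTrans_apply (s : G) (f : ↥(LUC G)) (x : G) :
    ((lTrans s f : ↥(LUC G)) : G →ᵇ ℂ) x = (f : G →ᵇ ℂ) (s * x) := rfl

variable (G) in
/-- The dual Banach space `LUC(G)*`. -/
abbrev LUCDual := StrongDual ℂ ↥(LUC G)

lemma lTrans_norm_le (s : G) (f : ↥(LUC G)) : ‖lTrans s f‖ ≤ ‖f‖ :=
  BoundedContinuousFunction.norm_compContinuous_le _ _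

lemma lTrans_add (s : G) (f g : ↥(LUC G)) :
    lTrans s (f + g) = lTrans s f + lTrans s g := by
  apply Subtype.ext; ext x; rfl

lemma lTrans_smul (s : G) (c : ℂ) (f : ↥(LUC G)) :
    lTrans s (c • f) = c • lTrans s f := by
  apply Subtype.ext; ext x; rfl

lemma luccond_continuous {g : G → ℂ}
    (h : ∀ ε > 0, ∃ U ∈ 𝓝 (1 : G), ∀ s t : G, s * t⁻¹ ∈ U → ‖g s - g t‖ < ε) :
    Continuous g := by
  rw [continuous_iff_continuousAt]
  intro t
  rw [ContinuousAt, Metric.tendsto_nhds]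
  intro ε hε
  obtain ⟨U, hU, hUf⟩ := h ε hε
  have hmem : {s : G | s * t⁻¹ ∈ U} ∈ 𝓝 t := by
    have hc : ContinuousAt (fun s : G => s * t⁻¹) t := by fun_prop
    exact hc.preimage_mem_nhds (by simpa using hU)
  filter_upwards [hmem] with s hs
  rw [dist_eq_norm]
  exact hUf s t hs

lemma rAct_cond (n : LUCDual G) (f : ↥(LUC G)) :
    ∀ ε > 0, ∃ U ∈ 𝓝 (1 : G), ∀ s t : G, s * t⁻¹ ∈ U →
      ‖n (lTrans s f) - n (lTrans t f)‖ < ε := by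
  intro ε hε
  set δ := ε / (2 * (‖n‖ + 1)) with hδdef
  have hδ : 0 < δ := by positivity
  obtain ⟨U, hU, hUf⟩ := f.2 δ hδ
  refine ⟨U, hU, fun s t hst => ?_⟩
  have hdiff : ‖lTrans s f - lTrans t f‖ ≤ δ := by
    have : ‖((lTrans s f : ↥(LUC G)) : G →ᵇ ℂ) - ((lTrans t f : ↥(LUC G)) : G →ᵇ ℂ)‖ ≤ δ := by
      apply BoundedContinuousFunction.norm_le hδ.le |>.2
      intro x
      have hx : (s * x) * (t * x)⁻¹ ∈ U := by
        simpa [mul_inv_rev, mul_assoc] using hst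
      simpa using (hUf (s * x) (t * x) hx).le
    exact this
  calc ‖n (lTrans s f) - n (lTrans t f)‖ = ‖n (lTrans s f - lTrans t f)‖ := by
        rw [map_sub]
    _ ≤ ‖n‖ * ‖lTrans s f - lTrans t f‖ := n.le_opNorm _
    _ ≤ ‖n‖ * δ := mul_le_mul_of_nonneg_left hdiff (norm_nonneg n)
    _ < (‖n‖ + 1) * δ := mul_lt_mul_of_pos_right (by linarith) hδ
    _ = ε / 2 := by rw [hδdef]; field_simp
    _ < ε := by linarith

/-- The function `r_n f : s ↦ n (ℓ_s f)`, as an element of `LUC(G)`. -/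
def rAct (n : LUCDual G) (f : ↥(LUC G)) : ↥(LUC G) :=
  ⟨BoundedContinuousFunction.ofNormedAddCommGroup (fun s => n (lTrans s f))
      (luccond_continuous (rAct_cond n f))
      (‖n‖ * ‖f‖)
      (fun s => by
        calc ‖n (lTrans s f)‖ ≤ ‖n‖ * ‖lTrans s f‖ := n.le_opNorm _
          _ ≤ ‖n‖ * ‖f‖ := mul_le_mul_of_nonneg_left (lTrans_norm_le s f) (norm_nonneg n)),
   fun ε hε => by
      obtain ⟨U, hU, h⟩ := rAct_cond n f ε hε
      exact ⟨U, hU, fun s t hst => h s t hst⟩⟩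

@[simp] lemma rAct_apply (n : LUCDual G) (f : ↥(LUC G)) (s : G) :
    ((rAct n f : ↥(LUC G)) : G →ᵇ ℂ) s = n (lTrans s f) := rfl

lemma rAct_norm_le (n : LUCDual G) (f : ↥(LUC G)) : ‖rAct n f‖ ≤ ‖n‖ * ‖f‖ := by
  have h0 : (0 : ℝ) ≤ ‖n‖ * ‖f‖ := by positivity
  show ‖((rAct n f : ↥(LUC G)) : G →ᵇ ℂ)‖ ≤ ‖n‖ * ‖f‖
  refine (BoundedContinuousFunction.norm_le h0).2 fun s => ?_
  calc ‖n (lTrans s f)‖ ≤ ‖n‖ * ‖lTrans s f‖ := n.le_opNorm _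
    _ ≤ ‖n‖ * ‖f‖ := mul_le_mul_of_nonneg_left (lTrans_norm_le s f) (norm_nonneg n)

lemma rAct_add (n : LUCDual G) (f g : ↥(LUC G)) :
    rAct n (f + g) = rAct n f + rAct n g := by
  apply Subtype.ext
  ext s
  simp [rAct_apply, lTrans_add, map_add]

lemma rAct_smul (n : LUCDual G) (c : ℂ) (f : ↥(LUC G)) :
    rAct n (c • f) = c • rAct n f := by
  apply Subtype.ext
  ext s
  simp [rAct_apply, lTrans_smul, _root_.map_smul]

/-- Convolution on `LUC(G)*`: `(m ∗ n)(f) = m (r_n f)`. -/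
def conv (m n : LUCDual G) : LUCDual G :=
  LinearMap.mkContinuous
    { toFun := fun f => m (rAct n f)
      map_add' := by
        intro f g
        show m (rAct n (f + g)) = m (rAct n f) + m (rAct n g)
        rw [rAct_add, map_add]
      map_smul' := by
        intro c f
        show m (rAct n (c • f)) = c • m (rAct n f)
        rw [rAct_smul, _root_.map_smul] }
    (‖m‖ * ‖n‖)
    (fun f => by
      calc ‖m (rAct n f)‖ ≤ ‖m‖ * ‖rAct n f‖ := m.le_opNorm _
        _ ≤ ‖m‖ * (‖n‖ * ‖f‖) :=
            mul_le_mul_of_nonneg_left (rAct_norm_le n f) (norm_nonneg m)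
        _ = ‖m‖ * ‖n‖ * ‖f‖ := by ring)

@[simp] lemma conv_apply (m n : LUCDual G) (f : ↥(LUC G)) :
    conv m n f = m (rAct n f) := rfl

variable (G) in
/-- Convergence of a net in the UEB topology on `LUC(G)*`:
uniform convergence on every equi-LUC set. -/
def UEBTendsto {ι : Type*} (l : Filter ι) (m : ι → LUCDual G) (m₀ : LUCDual G) : Prop :=
  ∀ F : Set ↥(LUC G), EquiLUC G F → ∀ ε > 0, ∀ᶠ i in l, ∀ f ∈ F, ‖m i f - m₀ f‖ < ε

variable (G) in
/-- The UEB topology on `LUC(G)*`: the topology of uniform convergence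
on the equi-LUC subsets of `LUC(G)`. -/
def UEBTop : TopologicalSpace (LUCDual G) :=
  ⨅ F : {F : Set ↥(LUC G) // EquiLUC G F},
    TopologicalSpace.induced
      (fun m => UniformFun.ofFun (fun f : F.1 => m f.1) : LUCDual G → UniformFun F.1 ℂ)
      inferInstance

end LUCSpace

section MeasureStuff

variable {G : Type*} [Group G] [TopologicalSpace G] [IsTopologicalGroup G]
variable [MeasurableSpace G] [BorelSpace G]

lemma integrable_mul_luc (μ : Measure G) {f : G → ℂ} (hf : Integrable f μ)
    (h : ↥(LUC G)) : Integrable (fun x => f x * (h : G →ᵇ ℂ) x) μ := by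
  have hm : AEStronglyMeasurable (fun x => (h : G →ᵇ ℂ) x) μ :=
    ((h : G →ᵇ ℂ).continuous.aestronglyMeasurable)
  have := hf.bdd_mul hm (c := ‖(h : G →ᵇ ℂ)‖) (Filter.Eventually.of_forall fun x => (h : G →ᵇ ℂ).norm_coe_le_norm x)
  simpa [mul_comm] using this

/-- A function `f ∈ L¹(G,μ)` viewed as the element `h ↦ ∫ f·h dμ` of `LUC(G)*`. -/
def integFunctional (μ : Measure G) (f : G → ℂ) (hf : Integrable f μ) : LUCDual G :=
  LinearMap.mkContinuous
    { toFun := fun h : ↥(LUC G) => ∫ x, f x * (h : G →ᵇ ℂ) x ∂μ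
      map_add' := by
        intro h g
        have : (fun x => f x * ((h + g : ↥(LUC G)) : G →ᵇ ℂ) x)
            = fun x => f x * (h : G →ᵇ ℂ) x + f x * (g : G →ᵇ ℂ) x := by
          funext x
          simp [mul_add]
        show (∫ x, f x * ((h + g : ↥(LUC G)) : G →ᵇ ℂ) x ∂μ)
            = (∫ x, f x * (h : G →ᵇ ℂ) x ∂μ) + ∫ x, f x * (g : G →ᵇ ℂ) x ∂μ
        rw [this, integral_add (integrable_mul_luc μ hf h) (integrable_mul_luc μ hf g)]
      map_smul' := by
        intro c h
        have : (fun x => f x * ((c • h : ↥(LUC G)) : G →ᵇ ℂ) x)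
            = fun x => c • (f x * (h : G →ᵇ ℂ) x) := by
          funext x
          simp [smul_eq_mul]
          ring
        show (∫ x, f x * ((c • h : ↥(LUC G)) : G →ᵇ ℂ) x ∂μ)
            = c • ∫ x, f x * (h : G →ᵇ ℂ) x ∂μ
        rw [this, integral_smul] }
    (∫ x, ‖f x‖ ∂μ)
    (fun h => by
      calc ‖∫ x, f x * (h : G →ᵇ ℂ) x ∂μ‖ ≤ ∫ x, ‖f x * (h : G →ᵇ ℂ) x‖ ∂μ :=
            norm_integral_le_integral_norm _
        _ = ∫ x, ‖f x‖ * ‖(h : G →ᵇ ℂ) x‖ ∂μ := by simp [norm_mul]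
        _ ≤ ∫ x, ‖f x‖ * ‖h‖ ∂μ := by
            apply integral_mono ((integrable_mul_luc μ hf h).norm.congr ?_)
              (hf.norm.mul_const _)
            · intro x
              exact mul_le_mul_of_nonneg_left ((h : G →ᵇ ℂ).norm_coe_le_norm x)
                (norm_nonneg _)
            · filter_upwards with x
              simp [norm_mul]
        _ = (∫ x, ‖f x‖ ∂μ) * ‖h‖ := integral_mul_const _ _)

/-- An element of `LUC(G)*` given by a (complex) finite Radon measure, i.e. by a
linear combination of four finite inner-regular (w.r.t. compact sets) measures. -/
def IsRadonFunctional (m : LUCDual G) : Prop :=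
  ∃ μ : Fin 4 → Measure G, (∀ i, IsFiniteMeasure (μ i)) ∧ (∀ i, (μ i).InnerRegular) ∧
    ∀ f : ↥(LUC G), m f =
      ((∫ x, (f : G →ᵇ ℂ) x ∂(μ 0)) - ∫ x, (f : G →ᵇ ℂ) x ∂(μ 1))
        + Complex.I * ((∫ x, (f : G →ᵇ ℂ) x ∂(μ 2)) - ∫ x, (f : G →ᵇ ℂ) x ∂(μ 3))

/-- The convolution `f ∗ g (s) = ∫ f(st) g(t⁻¹) dμ(t)` of two functions. -/
def convFun (μ : Measure G) (f g : G → ℂ) : G → ℂ :=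
  fun s => ∫ t, f (s * t) * g t⁻¹ ∂μ

/-- Membership in the centre of the convolution algebra `L¹(G,μ)`. -/
def InCenterL1 (μ : Measure G) (h : G → ℂ) : Prop :=
  Integrable h μ ∧
    ∀ g : G → ℂ, Integrable g μ → convFun μ h g =ᵐ[μ] convFun μ g h

end MeasureStuff

section Plumbing

variable {G : Type*} [Group G] [TopologicalSpace G] [IsTopologicalGroup G]

lemma mem_nhds_UEBTop (m₀ : LUCDual G) {F : Set ↥(LUC G)} (hF : EquiLUC G F)
    {ε : ℝ} (hε : 0 < ε) :
    {m : LUCDual G | ∀ f ∈ F, ‖m f - m₀ f‖ < ε} ∈ @nhds _ (UEBTop G) m₀ := by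
  rw [UEBTop, _root_.nhds_iInf]
  apply Filter.mem_iInf_of_mem ⟨F, hF⟩
  rw [nhds_induced]
  refine Filter.mem_comap.2 ⟨{g | (UniformFun.ofFun (fun f : F => m₀ f.1), g) ∈
    UniformFun.gen F ℂ {p : ℂ × ℂ | dist p.1 p.2 < ε}}, ?_, ?_⟩
  · exact (UniformFun.hasBasis_nhds F ℂ _).mem_of_mem (Metric.dist_mem_uniformity hε)
  · intro m hm f hf
    have := hm ⟨f, hf⟩
    simpa [dist_eq_norm, norm_sub_rev] using this

lemma tendsto_UEBTop {ι : Type*} {l : Filter ι} {φ : ι → LUCDual G} {y : LUCDual G}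
    (h : ∀ F : Set ↥(LUC G), EquiLUC G F → ∀ ε > 0, ∀ᶠ i in l, ∀ f ∈ F, ‖φ i f - y f‖ < ε) :
    Filter.Tendsto φ l (@nhds _ (UEBTop G) y) := by
  rw [UEBTop, _root_.nhds_iInf, Filter.tendsto_iInf]
  rintro ⟨F, hF⟩
  rw [nhds_induced, Filter.tendsto_comap_iff]
  rw [(UniformFun.hasBasis_nhds F ℂ _).tendsto_right_iff]
  intro V hV
  obtain ⟨ε, hε, hεV⟩ := Metric.mem_uniformity_dist.1 hV
  filter_upwards [h F hF ε hε] with i hi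
  intro f
  exact hεV (by simpa [dist_eq_norm, norm_sub_rev] using hi f.1 f.2)

end Plumbing

section Aux

variable {G : Type*} [Group G] [TopologicalSpace G] [IsTopologicalGroup G]

lemma equiLUC_rAct {B : Set (LUCDual G)} {F : Set ↥(LUC G)}
    (hF : EquiLUC G F) {C2 : ℝ} (hB : ∀ n ∈ B, ‖n‖ ≤ C2) :
    EquiLUC G {g | ∃ n ∈ B, ∃ f ∈ F, g = rAct n f} := by
  obtain ⟨⟨CF, hCF⟩, hFun⟩ := hF
  constructor
  · refine ⟨max C2 0 * max CF 0, ?_⟩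
    rintro g ⟨n, hn, f, hf, rfl⟩
    calc ‖rAct n f‖ ≤ ‖n‖ * ‖f‖ := rAct_norm_le n f
      _ ≤ max C2 0 * max CF 0 := by
          apply mul_le_mul (le_max_of_le_left (hB n hn)) (le_max_of_le_left (hCF f hf))
            (norm_nonneg _) (le_max_right _ _)
  · intro ε hε
    have hC : (0:ℝ) ≤ max C2 0 := le_max_right _ _
    have hδ : 0 < ε / (max C2 0 + 1) := by positivity
    obtain ⟨U, hU, hUf⟩ := hFun _ hδ
    refine ⟨U, hU, ?_⟩
    rintro g ⟨n, hn, f, hf, rfl⟩ s t hst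
    have hdiff : ‖lTrans s f - lTrans t f‖ ≤ ε / (max C2 0 + 1) := by
      show ‖((lTrans s f - lTrans t f : ↥(LUC G)) : G →ᵇ ℂ)‖ ≤ _
      rw [AddSubgroupClass.coe_sub]
      apply (BoundedContinuousFunction.norm_le hδ.le).2
      intro x
      have hx : (s * x) * (t * x)⁻¹ ∈ U := by
        simpa [mul_inv_rev, mul_assoc] using hst
      simpa using (hUf f hf (s * x) (t * x) hx).le
    have hnC : ‖n‖ ≤ max C2 0 := le_max_of_le_left (hB n hn)
    calc ‖((rAct n f : ↥(LUC G)) : G →ᵇ ℂ) s - ((rAct n f : ↥(LUC G)) : G →ᵇ ℂ) t‖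
        = ‖n (lTrans s f - lTrans t f)‖ := by rw [rAct_apply, rAct_apply, ← map_sub]
      _ ≤ ‖n‖ * ‖lTrans s f - lTrans t f‖ := n.le_opNorm _
      _ ≤ max C2 0 * (ε / (max C2 0 + 1)) := by
          apply mul_le_mul hnC hdiff (norm_nonneg _) hC
      _ < (max C2 0 + 1) * (ε / (max C2 0 + 1)) :=
          mul_lt_mul_of_pos_right (by linarith) hδ
      _ = ε := by field_simp

lemma equiLUC_lTrans {K : Set G} (hK : IsCompact K) {F : Set ↥(LUC G)} (hF : EquiLUC G F) :
    EquiLUC G {g | ∃ s ∈ K, ∃ f ∈ F, g = lTrans s f} := by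
  obtain ⟨⟨CF, hCF⟩, hFun⟩ := hF
  constructor
  · refine ⟨max CF 0, ?_⟩
    rintro g ⟨s, _, f, hf, rfl⟩
    exact le_trans (lTrans_norm_le s f) (le_max_of_le_left (hCF f hf))
  · intro ε hε
    obtain ⟨U, hU, hUf⟩ := hFun ε hε
    obtain ⟨U', hU'sub, hU'open, hU'mem⟩ := mem_nhds_iff.1 hU
    have hφ : Continuous (fun q : G × G => q.1 * q.2 * q.1⁻¹) := by fun_prop
    have hsub : K ×ˢ ({1} : Set G) ⊆ (fun q : G × G => q.1 * q.2 * q.1⁻¹) ⁻¹' U' := by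
      rintro ⟨s, v⟩ ⟨-, hv⟩
      have : v = 1 := hv
      simp [this, hU'mem]
    obtain ⟨u, v, hu, hv, hKu, h1v, huv⟩ :=
      generalized_tube_lemma hK isCompact_singleton (hU'open.preimage hφ) hsub
    refine ⟨v, hv.mem_nhds (h1v rfl), ?_⟩
    rintro g ⟨s, hs, f, hf, rfl⟩ x y hxy
    have hin : s * (x * y⁻¹) * s⁻¹ ∈ U' := huv (Set.mk_mem_prod (hKu hs) hxy)
    have hU2 : (s * x) * (s * y)⁻¹ ∈ U := by
      apply hU'sub
      simpa [mul_inv_rev, mul_assoc] using hin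
    simpa using hUf f hf (s * x) (s * y) hU2

variable [MeasurableSpace G] [BorelSpace G]

lemma exists_compact_close (μ : Measure G) [IsFiniteMeasure μ] (hreg : μ.InnerRegular)
    {δ : ENNReal} (hδ : 0 < δ) : ∃ K : Set G, IsCompact K ∧ μ Set.univ ≤ μ K + δ := by
  by_cases h : μ Set.univ ≤ δ
  · exact ⟨∅, isCompact_empty, le_trans h le_add_self⟩
  · push_neg at h
    have h1 : μ Set.univ - δ < μ Set.univ :=
      ENNReal.sub_lt_self (measure_ne_top μ _) (fun h0 => by simp [h0] at h) hδ.ne'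
    obtain ⟨K, -, hKc, hK⟩ := hreg.innerRegular MeasurableSet.univ _ h1
    exact ⟨K, hKc, tsub_le_iff_right.1 hK.le⟩

lemma integral_norm_le_of_small_on_compact (μ : Measure G) [IsFiniteMeasure μ]
    (g : ↥(LUC G)) {ε₂ M δr : ℝ} (hε₂ : 0 ≤ ε₂) (hMnn : 0 ≤ M) (hδr : 0 ≤ δr)
    (hM : ∀ x, ‖(g : G →ᵇ ℂ) x‖ ≤ M) {K : Set G}
    (hgK : ∀ x ∈ K, ‖(g : G →ᵇ ℂ) x‖ ≤ ε₂)
    (hKμ : μ Set.univ ≤ μ K + ENNReal.ofReal δr) :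
    ∫ x, ‖(g : G →ᵇ ℂ) x‖ ∂μ ≤ ε₂ * (μ Set.univ).toReal + M * δr := by
  set V : Set G := {x | ‖(g : G →ᵇ ℂ) x‖ ≤ ε₂} with hV
  have hVclosed : IsClosed V := isClosed_le (by continuity) continuous_const
  have hVmeas : MeasurableSet V := hVclosed.measurableSet
  have hKV : K ⊆ V := hgK
  have hVc : μ Vᶜ ≤ ENNReal.ofReal δr := by
    rw [measure_compl hVmeas (measure_ne_top μ V)]
    calc μ Set.univ - μ V ≤ (μ K + ENNReal.ofReal δr) - μ V := tsub_le_tsub_right hKμ _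
      _ ≤ (μ V + ENNReal.ofReal δr) - μ V :=
          tsub_le_tsub_right (add_le_add (measure_mono hKV) le_rfl) _
      _ ≤ ENNReal.ofReal δr := by
          rw [add_comm]
          exact tsub_le_iff_right.2 le_rfl
  have hInt : MeasureTheory.Integrable (fun x => ‖(g : G →ᵇ ℂ) x‖) μ :=
    ((g : G →ᵇ ℂ).integrable μ).norm
  have hsplit : ∫ x, ‖(g : G →ᵇ ℂ) x‖ ∂μ
      = (∫ x in V, ‖(g : G →ᵇ ℂ) x‖ ∂μ) + ∫ x in Vᶜ, ‖(g : G →ᵇ ℂ) x‖ ∂μ :=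
    (MeasureTheory.integral_add_compl hVmeas hInt).symm
  have hb1 : ∫ x in V, ‖(g : G →ᵇ ℂ) x‖ ∂μ ≤ ε₂ * (μ V).toReal := by
    have := MeasureTheory.norm_setIntegral_le_of_norm_le_const (measure_lt_top μ V)
      (f := fun x => ‖(g : G →ᵇ ℂ) x‖) (C := ε₂) (fun x hx => by
        simpa [hV, abs_of_nonneg (norm_nonneg _)] using hx)
    exact le_trans (le_abs_self _) (by simpa [Real.norm_eq_abs, measureReal_def] using this)
  have hb2 : ∫ x in Vᶜ, ‖(g : G →ᵇ ℂ) x‖ ∂μ ≤ M * δr := by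
    have h := MeasureTheory.norm_setIntegral_le_of_norm_le_const (measure_lt_top μ Vᶜ)
      (f := fun x => ‖(g : G →ᵇ ℂ) x‖) (C := M) (fun x _ => by
        simpa [abs_of_nonneg (norm_nonneg _)] using hM x)
    have h2 : (μ Vᶜ).toReal ≤ δr := by
      have := ENNReal.toReal_mono ENNReal.ofReal_ne_top hVc
      simpa [ENNReal.toReal_ofReal hδr] using this
    calc ∫ x in Vᶜ, ‖(g : G →ᵇ ℂ) x‖ ∂μ ≤ M * (μ Vᶜ).toReal :=
          le_trans (le_abs_self _) (by simpa [Real.norm_eq_abs, measureReal_def] using h)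
      _ ≤ M * δr := mul_le_mul_of_nonneg_left h2 hMnn
  calc ∫ x, ‖(g : G →ᵇ ℂ) x‖ ∂μ ≤ ε₂ * (μ V).toReal + M * δr := by
        rw [hsplit]; exact add_le_add hb1 hb2
    _ ≤ ε₂ * (μ Set.univ).toReal + M * δr := by
        have hmono : (μ V).toReal ≤ (μ Set.univ).toReal :=
          ENNReal.toReal_mono (measure_ne_top μ _) (measure_mono (Set.subset_univ V))
        exact add_le_add (mul_le_mul_of_nonneg_left hmono hε₂) le_rfl

end Aux

set_option maxHeartbeats 2000000 in
/-- **Corollary (paper Cor 5.5).** For every topological group, convolution is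
jointly UEB continuous on norm-bounded subsets of `M(G)`. -/
theorem conv_UEB_jointly_continuous_on_bounded_measures
    (G : Type*) [Group G] [TopologicalSpace G] [IsTopologicalGroup G]
    [MeasurableSpace G] [BorelSpace G]
    (B₁ B₂ : Set (LUCDual G))
    (h₁ : ∀ m ∈ B₁, IsRadonFunctional m) (h₂ : ∀ m ∈ B₂, IsRadonFunctional m)
    (hb₁ : ∃ C, ∀ m ∈ B₁, ‖m‖ ≤ C) (hb₂ : ∃ C, ∀ m ∈ B₂, ‖m‖ ≤ C) :
    @ContinuousOn (LUCDual G × LUCDual G) (LUCDual G)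
      (@instTopologicalSpaceProd _ _ (UEBTop G) (UEBTop G)) (UEBTop G)
      (fun p => conv p.1 p.2) (B₁ ×ˢ B₂) := by
  letI : TopologicalSpace (LUCDual G) := UEBTop G
  obtain ⟨C₂, hC₂b⟩ := hb₂
  rintro ⟨m₀, n₀⟩ ⟨hm₀, hn₀⟩
  show Filter.Tendsto (fun p : LUCDual G × LUCDual G => conv p.1 p.2)
    (nhdsWithin (m₀, n₀) (B₁ ×ˢ B₂)) (nhds (conv m₀ n₀))
  apply tendsto_UEBTop
  intro F hF ε hε
  -- constants
  obtain ⟨CFb, hCFb⟩ := hF.1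
  set CF := max CFb 0 with hCFdef
  have hCF : ∀ f ∈ F, ‖f‖ ≤ CF := fun f hf => le_max_of_le_left (hCFb f hf)
  have hCF0 : (0:ℝ) ≤ CF := le_max_right _ _
  set C2 := max C₂ 0 with hC2def
  have hC2 : ∀ n ∈ B₂, ‖n‖ ≤ C2 := fun n hn => le_max_of_le_left (hC₂b n hn)
  have hC20 : (0:ℝ) ≤ C2 := le_max_right _ _
  set M := 2 * C2 * CF + 1 with hMdef
  have hM0 : (0:ℝ) < M := by positivity
  -- Radon decomposition of m₀
  obtain ⟨μ, hfin, hreg, hrep⟩ := h₁ m₀ hm₀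
  haveI := hfin 0; haveI := hfin 1; haveI := hfin 2; haveI := hfin 3
  set T := ((μ 0) Set.univ).toReal + ((μ 1) Set.univ).toReal
    + ((μ 2) Set.univ).toReal + ((μ 3) Set.univ).toReal with hTdef
  have hT0 : (0:ℝ) ≤ T := by positivity
  set ε₂ := ε / (4 * (T + 1)) with hε₂def
  have hε₂ : (0:ℝ) < ε₂ := by positivity
  set δr := ε / (16 * (M + 1)) with hδrdef
  have hδr : (0:ℝ) < δr := by positivity
  -- compact set K
  have hKex : ∀ i : Fin 4, ∃ K, IsCompact K ∧ (μ i) Set.univ ≤ (μ i) K + ENNReal.ofReal δr := by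
    intro i
    haveI := hfin i
    exact exists_compact_close (μ i) (hreg i) (by simp [ENNReal.ofReal_pos, hδr])
  choose Ki hKic hKiμ using hKex
  set K := ⋃ i, Ki i with hKdef
  have hKcomp : IsCompact K := isCompact_iUnion hKic
  have hKμ : ∀ i, (μ i) Set.univ ≤ (μ i) K + ENNReal.ofReal δr :=
    fun i => le_trans (hKiμ i) (add_le_add (measure_mono (Set.subset_iUnion Ki i)) le_rfl)
  -- equi-LUC families
  set F₁ : Set ↥(LUC G) := {g | ∃ n ∈ B₂, ∃ f ∈ F, g = rAct n f} with hF₁def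
  have hF₁ : EquiLUC G F₁ := equiLUC_rAct hF hC2
  set F₂ : Set ↥(LUC G) := {g | ∃ s ∈ K, ∃ f ∈ F, g = lTrans s f} with hF₂def
  have hF₂ : EquiLUC G F₂ := equiLUC_lTrans hKcomp hF
  -- eventual conditions
  have hev1 : ∀ᶠ p : LUCDual G × LUCDual G in nhdsWithin (m₀, n₀) (B₁ ×ˢ B₂),
      ∀ g ∈ F₁, ‖p.1 g - m₀ g‖ < ε / 2 := by
    apply Filter.Eventually.filter_mono nhdsWithin_le_nhds
    rw [nhds_prod_eq]
    have h1 : ∀ᶠ m in nhds m₀, ∀ g ∈ F₁, ‖m g - m₀ g‖ < ε / 2 :=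
      mem_nhds_UEBTop m₀ hF₁ (by positivity)
    exact h1.prod_inl _
  have hev2 : ∀ᶠ p : LUCDual G × LUCDual G in nhdsWithin (m₀, n₀) (B₁ ×ˢ B₂),
      ∀ g ∈ F₂, ‖p.2 g - n₀ g‖ < ε₂ := by
    apply Filter.Eventually.filter_mono nhdsWithin_le_nhds
    rw [nhds_prod_eq]
    have h1 : ∀ᶠ n in nhds n₀, ∀ g ∈ F₂, ‖n g - n₀ g‖ < ε₂ :=
      mem_nhds_UEBTop n₀ hF₂ hε₂
    exact h1.prod_inr _
  have hev0 : ∀ᶠ p : LUCDual G × LUCDual G in nhdsWithin (m₀, n₀) (B₁ ×ˢ B₂),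
      p ∈ B₁ ×ˢ B₂ := self_mem_nhdsWithin
  filter_upwards [hev0, hev1, hev2] with p hp h1 h2
  intro f hf
  have hp1 : p.1 ∈ B₁ := hp.1
  have hp2 : p.2 ∈ B₂ := hp.2
  set g₀ : ↥(LUC G) := rAct p.2 f - rAct n₀ f with hg₀
  have hg₀x : ∀ x, ((g₀ : ↥(LUC G)) : G →ᵇ ℂ) x = p.2 (lTrans x f) - n₀ (lTrans x f) := by
    intro x
    rw [hg₀, AddSubgroupClass.coe_sub]
    simp
  have key1 : ‖p.1 (rAct p.2 f) - m₀ (rAct p.2 f)‖ < ε / 2 :=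
    h1 _ ⟨p.2, hp2, f, hf, rfl⟩
  have hg₀K : ∀ x ∈ K, ‖((g₀ : ↥(LUC G)) : G →ᵇ ℂ) x‖ ≤ ε₂ := by
    intro x hx
    rw [hg₀x x]
    exact (h2 _ ⟨x, hx, f, hf, rfl⟩).le
  have hg₀M : ∀ x, ‖((g₀ : ↥(LUC G)) : G →ᵇ ℂ) x‖ ≤ M := by
    intro x
    rw [hg₀x x]
    have b1 : ‖p.2 (lTrans x f)‖ ≤ C2 * CF :=
      le_trans (p.2.le_opNorm _) (mul_le_mul (hC2 _ hp2)
        (le_trans (lTrans_norm_le x f) (hCF f hf)) (norm_nonneg _) hC20)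
    have b2 : ‖n₀ (lTrans x f)‖ ≤ C2 * CF :=
      le_trans (n₀.le_opNorm _) (mul_le_mul (hC2 _ hn₀)
        (le_trans (lTrans_norm_le x f) (hCF f hf)) (norm_nonneg _) hC20)
    calc ‖p.2 (lTrans x f) - n₀ (lTrans x f)‖
        ≤ ‖p.2 (lTrans x f)‖ + ‖n₀ (lTrans x f)‖ := norm_sub_le _ _
      _ ≤ M := by rw [hMdef]; linarith
  have hint : ∀ i : Fin 4, ‖∫ x, ((g₀ : ↥(LUC G)) : G →ᵇ ℂ) x ∂(μ i)‖
      ≤ ε₂ * ((μ i) Set.univ).toReal + M * δr := by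
    intro i
    haveI := hfin i
    refine le_trans (norm_integral_le_integral_norm _) ?_
    exact integral_norm_le_of_small_on_compact (μ i) g₀ hε₂.le hM0.le hδr.le hg₀M hg₀K (hKμ i)
  have key2 : ‖m₀ g₀‖ ≤ ε₂ * T + 4 * (M * δr) := by
    rw [hrep g₀]
    have h0 := hint 0
    have hh1 := hint 1
    have hh2 := hint 2
    have hh3 := hint 3
    calc ‖((∫ x, ((g₀ : ↥(LUC G)) : G →ᵇ ℂ) x ∂(μ 0)) - ∫ x, ((g₀ : ↥(LUC G)) : G →ᵇ ℂ) x ∂(μ 1))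
          + Complex.I * ((∫ x, ((g₀ : ↥(LUC G)) : G →ᵇ ℂ) x ∂(μ 2))
            - ∫ x, ((g₀ : ↥(LUC G)) : G →ᵇ ℂ) x ∂(μ 3))‖
        ≤ ‖(∫ x, ((g₀ : ↥(LUC G)) : G →ᵇ ℂ) x ∂(μ 0)) - ∫ x, ((g₀ : ↥(LUC G)) : G →ᵇ ℂ) x ∂(μ 1)‖
          + ‖Complex.I * ((∫ x, ((g₀ : ↥(LUC G)) : G →ᵇ ℂ) x ∂(μ 2))
            - ∫ x, ((g₀ : ↥(LUC G)) : G →ᵇ ℂ) x ∂(μ 3))‖ := norm_add_le _ _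
      _ ≤ (‖∫ x, ((g₀ : ↥(LUC G)) : G →ᵇ ℂ) x ∂(μ 0)‖ + ‖∫ x, ((g₀ : ↥(LUC G)) : G →ᵇ ℂ) x ∂(μ 1)‖)
          + (‖∫ x, ((g₀ : ↥(LUC G)) : G →ᵇ ℂ) x ∂(μ 2)‖
            + ‖∫ x, ((g₀ : ↥(LUC G)) : G →ᵇ ℂ) x ∂(μ 3)‖) := by
          rw [norm_mul, Complex.norm_I, one_mul]
          exact add_le_add (norm_sub_le _ _) (norm_sub_le _ _)
      _ ≤ ε₂ * T + 4 * (M * δr) := by rw [hTdef]; linarith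
  have hfinal : ‖conv p.1 p.2 f - conv m₀ n₀ f‖
      < ε / 2 + (ε₂ * T + 4 * (M * δr)) := by
    have e : conv p.1 p.2 f - conv m₀ n₀ f
        = (p.1 (rAct p.2 f) - m₀ (rAct p.2 f)) + m₀ g₀ := by
      rw [conv_apply, conv_apply, hg₀, map_sub]
      ring
    rw [e]
    exact lt_of_le_of_lt (norm_add_le _ _) (add_lt_add_of_lt_of_le key1 key2)
  have hb1 : ε₂ * T ≤ ε / 4 := by
    rw [hε₂def, div_mul_eq_mul_div, div_le_div_iff₀ (by positivity) (by norm_num)]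
    nlinarith [mul_nonneg hε.le hT0]
  have hb2 : 4 * (M * δr) ≤ ε / 4 := by
    have e : 4 * (M * δr) = (4 * M * ε) / (16 * (M + 1)) := by rw [hδrdef]; ring
    rw [e, div_le_div_iff₀ (by positivity) (by norm_num)]
    nlinarith [mul_pos hM0 hε]
  calc ‖conv p.1 p.2 f - conv m₀ n₀ f‖ < ε / 2 + (ε₂ * T + 4 * (M * δr)) := hfinal
    _ ≤ ε := by linarith
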